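/- The determinant of the distance matrix of any tree on n ≥ 2 vertices equals (-1)^{n-1} (n-1) 2^{n-2}, independent of the structure of the tree. -/

import Mathlib

open SimpleGraph Matrix

section GraphLemmas

variable {V : Type*}

private lemma leaf_dist_eq {G : SimpleGraph V} (hc : G.Connected) {u w : V} (hw : G.Adj u w)
    (huniq : ∀ x, G.Adj u x → x = w) {v : V} (hv : v ≠ u) :
    G.dist u v = G.dist w v + 1 := by
  have h1 : G.dist u w = 1 := SimpleGraph.dist_eq_one_iff_adj.2 hw
  have hle : G.dist u v ≤ G.dist u w + G.dist w v := hc.dist_triangle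
  have hge : G.dist w v + 1 ≤ G.dist u v := by
    obtain ⟨p, hp⟩ := (hc.preconnected u v).exists_walk_length_eq_dist
    obtain ⟨x, hadj, q, rfl⟩ := SimpleGraph.Walk.exists_eq_cons_of_ne (Ne.symm hv) p
    have hx : w = x := (huniq x hadj).symm
    subst hx
    have hq : G.dist w v ≤ q.length := SimpleGraph.dist_le q
    simp only [SimpleGraph.Walk.length_cons] at hp
    omega
  omega

private lemma exists_walk_avoid [DecidableEq V] (G : SimpleGraph V) {u w : V}
    (huniq : ∀ x, G.Adj u x → x = w) :
    ∀ (k : ℕ) {a b : V} (p : G.Walk a b), p.length ≤ k → a ≠ u → b ≠ u →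
      ∃ q : G.Walk a b, (∀ x ∈ q.support, x ≠ u) ∧ q.length ≤ p.length := by
  intro k
  induction k with
  | zero =>
    intro a b p hp ha hb
    by_cases hu : u ∈ p.support
    · cases p with
      | nil =>
        simp only [SimpleGraph.Walk.support_nil, List.mem_singleton] at hu
        exact absurd hu.symm ha
      | cons h q => simp at hp
    · exact ⟨p, fun x hx hxu => hu (hxu ▸ hx), le_rfl⟩
  | succ k ih =>
    intro a b p hp ha hb
    by_cases hu : u ∈ p.support
    · have hspec := p.take_spec hu
      have hlen : (p.takeUntil u hu).length + (p.dropUntil u hu).length = p.length := by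
        rw [← SimpleGraph.Walk.length_append, hspec]
      obtain ⟨x, hadj, r2, hr2⟩ :=
        SimpleGraph.Walk.exists_eq_cons_of_ne (Ne.symm ha) (p.takeUntil u hu).reverse
      have hx : w = x := (huniq x hadj).symm; subst hx
      obtain ⟨y, hadj2, s2, hs2⟩ :=
        SimpleGraph.Walk.exists_eq_cons_of_ne (fun h => hb h.symm) (p.dropUntil u hu)
      have hy : w = y := (huniq y hadj2).symm; subst hy
      have hrlen : (p.takeUntil u hu).length = r2.length + 1 := by
        have := congrArg SimpleGraph.Walk.length hr2
        simpa using this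
      have hslen : (p.dropUntil u hu).length = s2.length + 1 := by
        have := congrArg SimpleGraph.Walk.length hs2
        simpa using this
      set q0 : G.Walk a b := r2.reverse.append s2 with hq0
      have hq0len : q0.length = r2.length + s2.length := by
        simp [hq0]
      obtain ⟨q, hqs, hqlen⟩ := ih q0 (by omega) ha hb
      exact ⟨q, hqs, by omega⟩
    · exact ⟨p, fun x hx hxu => hu (hxu ▸ hx), le_rfl⟩

private lemma exists_lift_walk {G : SimpleGraph V} {S : Set V} :
    ∀ {a b : V} (p : G.Walk a b) (ha : a ∈ S) (hb : b ∈ S),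
      (∀ x ∈ p.support, x ∈ S) →
      ∃ q : (G.induce S).Walk ⟨a, ha⟩ ⟨b, hb⟩, q.length = p.length := by
  intro a b p
  induction p with
  | nil => exact fun ha hb _ => ⟨SimpleGraph.Walk.nil, rfl⟩
  | @cons a c b hadj p ih =>
    intro ha hb hsup
    have hc : c ∈ S := hsup c (by simp)
    obtain ⟨q, hq⟩ := ih hc hb (fun x hx => hsup x (by simp [hx]))
    refine ⟨SimpleGraph.Walk.cons (by exact hadj) q, ?_⟩
    exact congrArg (· + 1) hq

private lemma induce_dist_eq [DecidableEq V] {G : SimpleGraph V} (hG : G.IsTree) {u w : V} (hw : G.Adj u w)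
    (huniq : ∀ x, G.Adj u x → x = w) :
    (G.induce {v | ¬ v = u}).IsTree ∧
      ∀ a b : {v | ¬ v = u}, (G.induce {v | ¬ v = u}).dist a b = G.dist a.val b.val := by
  set S : Set V := {v | ¬ v = u} with hS
  have hc := hG.isConnected
  -- lifting: any two vertices of S are joined in the induced graph by a walk of length dist
  have hlift : ∀ a b : S, ∃ q : (G.induce S).Walk a b, q.length ≤ G.dist a.val b.val := by
    rintro ⟨a, ha⟩ ⟨b, hb⟩
    obtain ⟨p, hp⟩ := (hc.preconnected a b).exists_walk_length_eq_dist
    obtain ⟨q, hqs, hqlen⟩ := exists_walk_avoid G huniq p.length p le_rfl ha hb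
    obtain ⟨q', hq'⟩ := exists_lift_walk q ha hb (fun x hx => hqs x hx)
    refine ⟨q', ?_⟩
    rw [hq']
    exact le_of_le_of_eq hqlen hp
  -- the embedding hom down to G
  have hmap : ∀ (a b : S) (q : (G.induce S).Walk a b),
      ∃ p : G.Walk a.val b.val, p.length = q.length := by
    intro a b q
    exact ⟨q.map (SimpleGraph.Embedding.induce S).toHom, SimpleGraph.Walk.length_map _ _⟩
  have hconn : (G.induce S).Connected := by
    haveI : Nonempty ↥S := ⟨⟨w, fun h => (G.ne_of_adj hw) h.symm⟩⟩
    refine ⟨fun a b => ?_⟩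
    obtain ⟨q, _⟩ := hlift a b
    exact q.reachable
  have hac : (G.induce S).IsAcyclic := by
    intro v c hcyc
    have hinj : Function.Injective ((SimpleGraph.Embedding.induce (G := G) S).toHom) :=
      Subtype.val_injective
    exact hG.IsAcyclic (c.map (SimpleGraph.Embedding.induce S).toHom)
      ((SimpleGraph.Walk.map_isCycle_iff_of_injective hinj).2 hcyc)
  refine ⟨⟨hconn, hac⟩, fun a b => ?_⟩
  apply le_antisymm
  · obtain ⟨q, hq⟩ := hlift a b
    exact le_trans (SimpleGraph.dist_le q) hq
  · obtain ⟨q, hq⟩ := (hconn.preconnected a b).exists_walk_length_eq_dist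
    obtain ⟨p, hp⟩ := hmap a b q
    calc G.dist a.val b.val ≤ p.length := SimpleGraph.dist_le p
    _ = (G.induce S).dist a b := by rw [hp, hq]

private lemma exists_leaf {V : Type*} [Fintype V] [DecidableEq V] {G : SimpleGraph V}
    (hG : G.IsTree) (hn : 2 ≤ Fintype.card V) :
    ∃ u w, G.Adj u w ∧ ∀ x, G.Adj u x → x = w := by
  classical
  haveI : DecidableRel G.Adj := Classical.decRel _
  have hedge : G.edgeFinset.card + 1 = Fintype.card V := hG.card_edgeFinset
  have hdegpos : ∀ v : V, 0 < G.degree v := by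
    intro v
    rw [SimpleGraph.degree_pos_iff_exists_adj]
    obtain ⟨v', hv'⟩ := Fintype.exists_ne_of_one_lt_card (by omega) v
    obtain ⟨p⟩ := hG.isConnected.preconnected v' v
    obtain ⟨x, hadj, -, -⟩ := SimpleGraph.Walk.exists_eq_cons_of_ne (Ne.symm hv') p.reverse
    exact ⟨x, hadj⟩
  have hsum : ∑ v, G.degree v = 2 * G.edgeFinset.card :=
    G.sum_degrees_eq_twice_card_edges
  have : ∃ u : V, G.degree u = 1 := by
    by_contra h
    push_neg at h
    have h2 : ∀ v : V, 2 ≤ G.degree v := by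
      intro v
      have := hdegpos v
      have := h v
      omega
    have : 2 * Fintype.card V ≤ ∑ v, G.degree v := by
      calc 2 * Fintype.card V = ∑ _v : V, 2 := by
            simp [Finset.sum_const, mul_comm]
      _ ≤ ∑ v, G.degree v := Finset.sum_le_sum fun v _ => h2 v
    omega
  obtain ⟨u, hu⟩ := this
  have : (G.neighborFinset u).card = 1 := by
    rwa [SimpleGraph.card_neighborFinset_eq_degree]
  obtain ⟨w, hw⟩ := Finset.card_eq_one.1 this
  refine ⟨u, w, ?_, ?_⟩
  · have : w ∈ G.neighborFinset u := by rw [hw]; exact Finset.mem_singleton_self w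
    rwa [SimpleGraph.mem_neighborFinset] at this
  · intro x hx
    have : x ∈ G.neighborFinset u := by rwa [SimpleGraph.mem_neighborFinset]
    rw [hw, Finset.mem_singleton] at this
    exact this

end GraphLemmas

private lemma tree_det_key : ∀ (n : ℕ) (V : Type v) [Fintype V] [DecidableEq V]
    (G : SimpleGraph V), G.IsTree → Fintype.card V = n + 2 → ∀ t : ℝ,
    (Matrix.of fun a b => (G.dist a b : ℝ) + t).det
      = (-1 : ℝ) ^ (n + 1) * 2 ^ n * ((n + 1) + 2 * t) := by
  intro n
  induction n with
  | zero =>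
    intro V _ _ G hG hcard t
    have hc := hG.isConnected
    have e : Fin 2 ≃ V := (Fintype.equivFinOfCardEq hcard).symm
    have hne : e 0 ≠ e 1 := fun h => by simpa using e.injective h
    have hdist : ∀ a b : V, a ≠ b → G.dist a b = 1 := by
      intro a b hab
      have h1 : 0 < G.dist a b := hc.pos_dist_of_ne hab
      obtain ⟨p, hp, hlen⟩ := hc.exists_path_of_dist a b
      have hlt := hp.length_lt
      rw [hcard] at hlt
      omega
    rw [← Matrix.det_submatrix_equiv_self e, Matrix.det_fin_two]
    simp only [Matrix.submatrix_apply, Matrix.of_apply]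
    rw [SimpleGraph.dist_self, SimpleGraph.dist_self, hdist _ _ hne, hdist _ _ (Ne.symm hne)]
    push_cast
    ring
  | succ n ih =>
    intro V _ _ G hG hcard t
    obtain ⟨u, w, hw, huniq⟩ := exists_leaf hG (by omega)
    have hc := hG.isConnected
    have hwu : w ≠ u := fun h => G.ne_of_adj hw h.symm
    -- distance facts
    have d0 : ∀ v : V, G.dist v v = 0 := fun v => SimpleGraph.dist_self
    have duw : G.dist u w = 1 := SimpleGraph.dist_eq_one_iff_adj.2 hw
    have dwu : G.dist w u = 1 := SimpleGraph.dist_eq_one_iff_adj.2 hw.symm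
    have dleaf : ∀ v : V, v ≠ u → G.dist u v = G.dist w v + 1 :=
      fun v hv => leaf_dist_eq hc hw huniq hv
    have dleaf' : ∀ v : V, v ≠ u → G.dist v u = G.dist v w + 1 := by
      intro v hv
      rw [SimpleGraph.dist_comm, dleaf v hv, SimpleGraph.dist_comm]
    set M : Matrix V V ℝ := Matrix.of fun a b => (G.dist a b : ℝ) + t with hM
    set M1 : Matrix V V ℝ := M.updateRow u (M u + (-1 : ℝ) • M w) with hM1
    set M2 : Matrix V V ℝ := M1.updateCol u (fun k => M1 k u + (-1 : ℝ) • M1 k w) with hM2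
    have hdet1 : M1.det = M.det := Matrix.det_updateRow_add_smul_self M (Ne.symm hwu) (-1)
    have hdet2 : M2.det = M1.det :=
      Matrix.det_updateCol_add_smul_self M1 (Ne.symm hwu) (-1)
    -- entries of M2
    have hM1e : ∀ x y : V, M1 x y =
        if x = u then (if y = u then (-1 : ℝ) else 1) else (G.dist x y : ℝ) + t := by
      intro x y
      by_cases hx : x = u
      · rw [if_pos hx, hx, hM1, Matrix.updateRow_self]
        by_cases hy : y = u
        · rw [if_pos hy, hy]
          simp only [Pi.add_apply, Pi.smul_apply, hM, Matrix.of_apply, d0 u, dwu]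
          simp only [smul_eq_mul]; push_cast; ring
        · rw [if_neg hy]
          simp only [Pi.add_apply, Pi.smul_apply, hM, Matrix.of_apply, dleaf y hy]
          simp only [smul_eq_mul]; push_cast; ring
      · rw [if_neg hx, hM1, Matrix.updateRow_ne hx]
        simp [hM]
    have hM2e : ∀ x y : V, M2 x y =
        if y = u then (if x = u then (-2 : ℝ) else 1)
        else (if x = u then 1 else (G.dist x y : ℝ) + t) := by
      intro x y
      by_cases hy : y = u
      · rw [if_pos hy, hy, hM2, Matrix.updateCol_self]
        by_cases hx : x = u
        · rw [if_pos hx, hx, hM1e u u, hM1e u w, if_pos rfl, if_pos rfl, if_neg hwu]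
          norm_num [smul_eq_mul]
        · rw [if_neg hx, hM1e x u, hM1e x w, if_neg hx, if_neg hx]
          rw [dleaf' x hx]
          simp only [smul_eq_mul]; push_cast; ring
      · rw [if_neg hy, hM2, Matrix.updateCol_ne hy, hM1e x y]
        by_cases hx : x = u
        · simp [hx, hy]
        · simp [hx, hy]
    -- row operations: add (1/2) * row u to every other row
    set A : Matrix V V ℝ :=
      Matrix.of fun a b => M2 a b + (if a = u then (0 : ℝ) else 1 / 2) * M2 u b with hA
    have hdet3 : A.det = M2.det := by
      apply Matrix.det_eq_of_forall_row_eq_smul_add_const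
        (fun a => if a = u then (0 : ℝ) else 1 / 2) u (if_pos rfl)
      intro i j
      rfl
    have hAe : ∀ a b : V, A a b =
        if a = u then (if b = u then (-2 : ℝ) else 1)
        else (if b = u then 0 else ((G.dist a b : ℝ) + (t + 1 / 2))) := by
      intro a b
      rw [hA, Matrix.of_apply, hM2e a b, hM2e u b]
      by_cases ha : a = u <;> by_cases hb : b = u <;> simp [ha, hb] <;> ring
    -- block decomposition
    haveI : Unique {v : V // v = u} := ⟨⟨⟨u, rfl⟩⟩, fun x => Subtype.ext x.prop⟩
    set e : {v : V // v = u} ⊕ {v : V // ¬ v = u} ≃ V := Equiv.sumCompl (fun v => v = u)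
      with he
    have hsub : A.submatrix e e = Matrix.fromBlocks
        (Matrix.of fun _ _ => (-2 : ℝ))
        (Matrix.of fun _ _ => (1 : ℝ))
        (0 : Matrix {v : V // ¬ v = u} {v : V // v = u} ℝ)
        (Matrix.of fun x y : {v : V // ¬ v = u} =>
          (G.dist x.val y.val : ℝ) + (t + 1 / 2)) := by
      ext i j
      cases i with
      | inl i =>
        cases j with
        | inl j =>
          simp only [Matrix.submatrix_apply, he, Equiv.sumCompl_apply_inl,
            Matrix.fromBlocks_apply₁₁, Matrix.of_apply]
          rw [hAe, if_pos i.prop, if_pos j.prop]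
        | inr j =>
          simp only [Matrix.submatrix_apply, he, Equiv.sumCompl_apply_inl,
            Equiv.sumCompl_apply_inr, Matrix.fromBlocks_apply₁₂, Matrix.of_apply]
          rw [hAe, if_pos i.prop, if_neg j.prop]
      | inr i =>
        cases j with
        | inl j =>
          simp only [Matrix.submatrix_apply, he, Equiv.sumCompl_apply_inl,
            Equiv.sumCompl_apply_inr, Matrix.fromBlocks_apply₂₁]
          rw [hAe, if_neg i.prop, if_pos j.prop]
          rfl
        | inr j =>
          simp only [Matrix.submatrix_apply, he, Equiv.sumCompl_apply_inr,
            Matrix.fromBlocks_apply₂₂, Matrix.of_apply]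
          rw [hAe, if_neg i.prop, if_neg j.prop]
    -- the induced tree
    obtain ⟨htree', hdist'⟩ := induce_dist_eq hG hw huniq
    have hcard' : Fintype.card {v : V // ¬ v = u} = n + 2 := by
      have h1 : Fintype.card {v : V // v = u} = 1 := Fintype.card_subtype_eq u
      have h2 := Fintype.card_subtype_compl (fun v : V => v = u)
      omega
    have hD : (Matrix.of fun x y : {v : V // ¬ v = u} =>
          (G.dist x.val y.val : ℝ) + (t + 1 / 2))
        = Matrix.of fun x y : {v : V // ¬ v = u} =>
          ((G.induce {v : V | ¬ v = u}).dist x y : ℝ) + (t + 1 / 2) := by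
      ext x y
      rw [Matrix.of_apply, Matrix.of_apply, hdist' x y]
    have hIH := ih {v : V // ¬ v = u} (G.induce {v : V | ¬ v = u}) htree' hcard' (t + 1 / 2)
    have hfinal : M.det = (-2) * ((-1 : ℝ) ^ (n + 1) * 2 ^ n * ((n + 1) + 2 * (t + 1 / 2))) := by
      rw [← hdet1, ← hdet2, ← hdet3, ← Matrix.det_submatrix_equiv_self e A, hsub,
        Matrix.det_fromBlocks_zero₂₁, Matrix.det_unique, hD, hIH]
      norm_num
    rw [hfinal]
    push_cast
    ring

/-- Graham–Pollak: the determinant of the distance matrix of any tree on `n ≥ 2`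
vertices is `(-1)^(n-1) (n-1) 2^(n-2)`. -/
theorem tree_distance_matrix_det {V : Type*} [Fintype V] [DecidableEq V]
    (G : SimpleGraph V) (hG : G.IsTree) (hn : 2 ≤ Fintype.card V) :
    (Matrix.of fun u v => (G.dist u v : ℝ)).det =
      (-1 : ℝ) ^ (Fintype.card V - 1) * (Fintype.card V - 1) *
        2 ^ (Fintype.card V - 2) := by
  obtain ⟨k, hk⟩ : ∃ k, Fintype.card V = k + 2 := ⟨Fintype.card V - 2, by omega⟩
  have hkey := tree_det_key k V G hG hk 0
  have hM : (Matrix.of fun u v => (G.dist u v : ℝ))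
      = Matrix.of fun a b => (G.dist a b : ℝ) + 0 := by
    ext a b; simp
  rw [hM, hkey, hk]
  have h1 : k + 2 - 1 = k + 1 := by omega
  have h2 : k + 2 - 2 = k := by omega
  rw [h1, h2]
  push_cast
  ring
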